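/- Let 𝒦 be the set of real symmetric positive semidefinite N×N matrices W with Tr W = N, let 𝔾 be the affine subspace of real symmetric N×N matrices with all diagonal entries equal to 1, and let 𝒢 = 𝒦 ∩ 𝔾 be the Gram set. For every face ℱ of 𝒢, let ℱ̄ denote the smallest face of 𝒦 containing ℱ (the intersection of all faces of 𝒦 containing ℱ). Then ℱ̄ ∩ 𝔾 = ℱ. -/

import Mathlib

open Matrix

/-- `F` is a face of the convex set `C`: a convex subset such that whenever a point of `F`
is a proper convex combination of two points of `C`, both points belong to `F`. -/
def IsFace {V : Type*} [AddCommGroup V] [Module ℝ V] (C F : Set V) : Prop :=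
  F ⊆ C ∧ Convex ℝ F ∧
    ∀ x ∈ F, ∀ y ∈ C, ∀ z ∈ C, ∀ α : ℝ, 0 < α → α < 1 →
      x = α • y + (1 - α) • z → y ∈ F ∧ z ∈ F

/-- `𝒦`: real symmetric positive semidefinite `N × N` matrices of trace `N`. -/
def KSet (N : ℕ) : Set (Matrix (Fin N) (Fin N) ℝ) :=
  {W | W.PosSemidef ∧ W.trace = (N : ℝ)}

/-- `𝔾`: real symmetric `N × N` matrices with unit diagonal. -/
def GSlice (N : ℕ) : Set (Matrix (Fin N) (Fin N) ℝ) :=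
  {G | G.IsSymm ∧ ∀ i, G i i = 1}

/-- The Gram set `𝒢 = 𝒦 ∩ 𝔾`. -/
def GramSet (N : ℕ) : Set (Matrix (Fin N) (Fin N) ℝ) := KSet N ∩ GSlice N

lemma psd_isSymm {N : ℕ} {W : Matrix (Fin N) (Fin N) ℝ} (h : W.PosSemidef) : W.IsSymm := by
  have h1 := h.1
  rwa [Matrix.IsHermitian, conjTranspose_eq_transpose_of_trivial] at h1

lemma convex_KSet (N : ℕ) : Convex ℝ (KSet N) := by
  intro W₁ hW₁ W₂ hW₂ a b ha hb hab
  refine ⟨⟨?_, ?_⟩, ?_⟩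
  · simp [Matrix.IsHermitian, conjTranspose_add, conjTranspose_smul,
      (psd_isSymm hW₁.1).eq, (psd_isSymm hW₂.1).eq]
  · intro x
    exact ((hW₁.1.smul ha).add (hW₂.1.smul hb)).2 x
  · simp [trace_add, trace_smul, hW₁.2, hW₂.2, smul_eq_mul, ← add_mul, hab]

/-- The smallest face of `𝒦` containing a face `ℱ` of `𝒢`, intersected with `𝔾`,
returns `ℱ` itself. -/
theorem face_extension_restriction (N : ℕ) (F : Set (Matrix (Fin N) (Fin N) ℝ))
    (hF : IsFace (GramSet N) F) :
    (⋂₀ {F' | IsFace (KSet N) F' ∧ F ⊆ F'}) ∩ GSlice N = F := by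
  classical
  obtain ⟨hFsub, hFconv, hFface⟩ := hF
  -- the auxiliary face of K
  set F' : Set (Matrix (Fin N) (Fin N) ℝ) :=
    {y | y ∈ KSet N ∧ ∃ x ∈ F, ∃ z ∈ KSet N, ∃ α : ℝ, 0 < α ∧ α < 1 ∧
      x = α • y + (1 - α) • z} with hF'def
  have hFF' : F ⊆ F' := by
    intro x hx
    refine ⟨(hFsub hx).1, x, hx, x, (hFsub hx).1, 1/2, by norm_num, by norm_num, ?_⟩
    rw [← add_smul]; norm_num
  have hKconv := convex_KSet N
  have hF'face : IsFace (KSet N) F' := by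
    refine ⟨fun y hy => hy.1, ?_, ?_⟩
    · -- convexity of F'
      intro y₁ hy₁ y₂ hy₂ a b ha hb hab
      rcases eq_or_lt_of_le ha with h0 | ha'
      · have hb1 : b = 1 := by linarith
        simpa [← h0, hb1] using hy₂
      rcases eq_or_lt_of_le hb with h0 | hb'
      · have ha1 : a = 1 := by linarith
        simpa [← h0, ha1] using hy₁
      have ha1 : a < 1 := by linarith
      obtain ⟨hy₁K, x₁, hx₁, z₁, hz₁, α₁, hα₁0, hα₁1, hx₁eq⟩ := hy₁
      obtain ⟨hy₂K, x₂, hx₂, z₂, hz₂, α₂, hα₂0, hα₂1, hx₂eq⟩ := hy₂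
      set d : ℝ := α₁ * b + a * α₂ with hd
      have hdpos : 0 < d := by positivity
      set s : ℝ := a * α₂ / d with hs
      have hs0 : 0 < s := by positivity
      have hs1 : s < 1 := by
        rw [hs, div_lt_one hdpos, hd]; nlinarith
      set β : ℝ := s * α₁ + (1 - s) * α₂ with hβ
      have hβ0 : 0 < β := by
        have h1 := mul_pos hs0 hα₁0
        have h2 := mul_pos (by linarith : (0:ℝ) < 1 - s) hα₂0
        rw [hβ]; nlinarith
      have hβ1 : β < 1 := by nlinarith
      have h1β : (0:ℝ) < 1 - β := by linarith
      refine ⟨hKconv hy₁K hy₂K ha hb hab, s • x₁ + (1 - s) • x₂,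
        hFconv hx₁ hx₂ hs0.le (by linarith) (by ring), ?_⟩
      set c₁ : ℝ := s * (1 - α₁) / (1 - β) with hc₁
      set c₂ : ℝ := (1 - s) * (1 - α₂) / (1 - β) with hc₂
      have hc₁0 : 0 ≤ c₁ :=
        div_nonneg (mul_nonneg hs0.le (by linarith)) h1β.le
      have hc₂0 : 0 ≤ c₂ :=
        div_nonneg (mul_nonneg (by linarith) (by linarith)) h1β.le
      have hcsum : c₁ + c₂ = 1 := by
        rw [hc₁, hc₂, ← add_div, div_eq_one_iff_eq h1β.ne']
        rw [hβ]; ring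
      refine ⟨c₁ • z₁ + c₂ • z₂, hKconv hz₁ hz₂ hc₁0 hc₂0 hcsum, β, hβ0, hβ1, ?_⟩
      -- scalar identities
      have key : a * (1 - s) * α₂ = s * α₁ * b := by
        rw [hs]; field_simp; rw [hd]; ring
      have h1 : β * a = s * α₁ := by
        rw [hβ]; linear_combination key + s * α₁ * hab
      have h2 : β * b = (1 - s) * α₂ := by
        rw [hβ]; linear_combination -key + (1 - s) * α₂ * hab
      have h3 : (1 - β) * c₁ = s * (1 - α₁) := by
        rw [hc₁]; field_simp
      have h4 : (1 - β) * c₂ = (1 - s) * (1 - α₂) := by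
        rw [hc₂]; field_simp
      rw [hx₁eq, hx₂eq]
      match_scalars <;> linarith [h1, h2, h3, h4]
    · -- face condition
      rintro y ⟨hyK, x, hx, z, hz, α, hα0, hα1, hxeq⟩ u hu v hv γ hγ0 hγ1 hyeq
      constructor
      · have h1 : 0 < α * γ := by positivity
        have h2 : α * γ < 1 := by nlinarith
        have h3 : (0:ℝ) < 1 - α * γ := by linarith
        set c₁ : ℝ := α * (1 - γ) / (1 - α * γ) with hc₁
        set c₂ : ℝ := (1 - α) / (1 - α * γ) with hc₂
        have hc₁0 : 0 ≤ c₁ :=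
          div_nonneg (mul_nonneg hα0.le (by linarith)) h3.le
        have hc₂0 : 0 ≤ c₂ := div_nonneg (by linarith) h3.le
        have hcsum : c₁ + c₂ = 1 := by
          rw [hc₁, hc₂, ← add_div, div_eq_one_iff_eq h3.ne']; ring
        refine ⟨hu, x, hx, c₁ • v + c₂ • z, hKconv hv hz hc₁0 hc₂0 hcsum,
          α * γ, h1, h2, ?_⟩
        have h4 : (1 - α * γ) * c₁ = α * (1 - γ) := by rw [hc₁]; field_simp
        have h5 : (1 - α * γ) * c₂ = 1 - α := by rw [hc₂]; field_simp
        rw [hxeq, hyeq]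
        match_scalars <;> linarith [h4, h5]
      · have h1 : 0 < α * (1 - γ) := by nlinarith
        have h2 : α * (1 - γ) < 1 := by nlinarith
        have h3 : (0:ℝ) < 1 - α * (1 - γ) := by linarith
        set c₁ : ℝ := α * γ / (1 - α * (1 - γ)) with hc₁
        set c₂ : ℝ := (1 - α) / (1 - α * (1 - γ)) with hc₂
        have hc₁0 : 0 ≤ c₁ :=
          div_nonneg (mul_nonneg hα0.le hγ0.le) h3.le
        have hc₂0 : 0 ≤ c₂ := div_nonneg (by linarith) h3.le
        have hcsum : c₁ + c₂ = 1 := by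
          rw [hc₁, hc₂, ← add_div, div_eq_one_iff_eq h3.ne']; ring
        refine ⟨hv, x, hx, c₁ • u + c₂ • z, hKconv hu hz hc₁0 hc₂0 hcsum,
          α * (1 - γ), h1, h2, ?_⟩
        have h4 : (1 - α * (1 - γ)) * c₁ = α * γ := by rw [hc₁]; field_simp
        have h5 : (1 - α * (1 - γ)) * c₂ = 1 - α := by rw [hc₂]; field_simp
        rw [hxeq, hyeq]
        match_scalars <;> linarith [h4, h5]
  have key : F' ∩ GSlice N ⊆ F := by
    rintro y ⟨⟨hyK, x, hx, z, hz, α, hα0, hα1, hxeq⟩, hyG⟩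
    have hzG : z ∈ GSlice N := by
      refine ⟨psd_isSymm hz.1, fun i => ?_⟩
      have hd := congrFun (congrFun hxeq i) i
      simp only [Matrix.add_apply, Matrix.smul_apply, smul_eq_mul] at hd
      have hxG := (hFsub hx).2
      rw [hxG.2 i, hyG.2 i] at hd
      have h1α : (1 - α) ≠ 0 := by linarith
      field_simp at hd
      nlinarith [hd]
    exact (hFface x hx y ⟨hyK, hyG⟩ z ⟨hz, hzG⟩ α hα0 hα1 hxeq).1
  apply Set.Subset.antisymm
  · intro W hW
    exact key ⟨hW.1 F' ⟨hF'face, hFF'⟩, hW.2⟩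
  · intro x hx
    exact ⟨fun F'' hF'' => hF''.2 hx, (hFsub hx).2⟩
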